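/- Resolvent difference bound for skew-symmetric matrices (used in the analysis of the practical iteration): Let A₁, A₂ be n×n real skew-symmetric matrices and U an n×N real matrix. Then (Iₙ + A₁) and (Iₙ + A₂) are invertible and ‖(Iₙ + A₁)⁻¹·U − (Iₙ + A₂)⁻¹·U‖_F ≤ σ_max(U)·‖A₁ − A₂‖_F. -/
import Mathlib


open Matrix

noncomputable section

/-- Frobenius norm of a real matrix. -/
def frobNorm {m k : ℕ} (A : Matrix (Fin m) (Fin k) ℝ) : ℝ :=
  Real.sqrt (∑ i, ∑ j, (A i j) ^ 2)

/-- Largest singular value (ℓ²-operator norm) of a real matrix. -/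
def sigmaMax {m k : ℕ} (A : Matrix (Fin m) (Fin k) ℝ) : ℝ :=
  ‖LinearMap.toContinuousLinearMap (Matrix.toEuclideanLin A)‖

section Aux

open scoped Matrix.Norms.L2Operator

lemma sigmaMax_eq_norm {m k : ℕ} (A : Matrix (Fin m) (Fin k) ℝ) : sigmaMax A = ‖A‖ := rfl

lemma sigmaMax_nonneg {m k : ℕ} (A : Matrix (Fin m) (Fin k) ℝ) : 0 ≤ sigmaMax A :=
  norm_nonneg (LinearMap.toContinuousLinearMap (Matrix.toEuclideanLin A))

lemma eucl_norm_eq {m : ℕ} (x : EuclideanSpace ℝ (Fin m)) :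
    ‖x‖ = Real.sqrt (∑ i, (x i) ^ 2) := by
  rw [EuclideanSpace.norm_eq]
  congr 1; exact Finset.sum_congr rfl fun i _ => by rw [Real.norm_eq_abs, sq_abs]

lemma frobNorm_nonneg {m k : ℕ} (A : Matrix (Fin m) (Fin k) ℝ) : 0 ≤ frobNorm A :=
  Real.sqrt_nonneg _

lemma frobNorm_transpose {m k : ℕ} (A : Matrix (Fin m) (Fin k) ℝ) :
    frobNorm Aᵀ = frobNorm A := by
  unfold frobNorm
  rw [Finset.sum_comm]
  rfl

lemma frobNorm_neg {m k : ℕ} (A : Matrix (Fin m) (Fin k) ℝ) : frobNorm (-A) = frobNorm A := by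
  simp [frobNorm]

lemma sigmaMax_transpose {m k : ℕ} (A : Matrix (Fin m) (Fin k) ℝ) :
    sigmaMax Aᵀ = sigmaMax A := by
  have h : Aᵀ = Aᴴ := by
    ext i j; simp [conjTranspose_apply]
  rw [sigmaMax_eq_norm, sigmaMax_eq_norm, h, Matrix.l2_opNorm_conjTranspose]

lemma sigmaMax_mul_le {m n k : ℕ} (A : Matrix (Fin m) (Fin n) ℝ) (B : Matrix (Fin n) (Fin k) ℝ) :
    sigmaMax (A * B) ≤ sigmaMax A * sigmaMax B := by
  rw [sigmaMax_eq_norm, sigmaMax_eq_norm, sigmaMax_eq_norm]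
  exact Matrix.l2_opNorm_mul A B

/-- Columnwise bound: `‖M X‖_F ≤ σ(M) ‖X‖_F`. -/
lemma frobNorm_mul_le_left {m n k : ℕ} (M : Matrix (Fin m) (Fin n) ℝ)
    (X : Matrix (Fin n) (Fin k) ℝ) :
    frobNorm (M * X) ≤ sigmaMax M * frobNorm X := by
  have key : ∀ j, ∑ i, ((M * X) i j) ^ 2 ≤ sigmaMax M ^ 2 * ∑ i, (X i j) ^ 2 := by
    intro j
    set T := LinearMap.toContinuousLinearMap (Matrix.toEuclideanLin M)
    set x : EuclideanSpace ℝ (Fin n) := (EuclideanSpace.equiv (Fin n) ℝ).symm (fun i => X i j)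
    have hT : ‖T x‖ ≤ sigmaMax M * ‖x‖ := T.le_opNorm x
    have hx : ‖x‖ = Real.sqrt (∑ i, (X i j) ^ 2) := eucl_norm_eq x
    have hTx : ‖T x‖ = Real.sqrt (∑ i, ((M * X) i j) ^ 2) := eucl_norm_eq (T x)
    rw [hTx, hx] at hT
    have h1 : (0:ℝ) ≤ Real.sqrt (∑ i, ((M * X) i j) ^ 2) := Real.sqrt_nonneg _
    have h2 : (0:ℝ) ≤ ∑ i, ((M * X) i j) ^ 2 :=
      Finset.sum_nonneg fun i _ => sq_nonneg _
    have h3 : (0:ℝ) ≤ ∑ i, (X i j) ^ 2 := Finset.sum_nonneg fun i _ => sq_nonneg _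
    calc ∑ i, ((M * X) i j) ^ 2
        = (Real.sqrt (∑ i, ((M * X) i j) ^ 2)) ^ 2 := (Real.sq_sqrt h2).symm
      _ ≤ (sigmaMax M * Real.sqrt (∑ i, (X i j) ^ 2)) ^ 2 := by
          apply pow_le_pow_left₀ h1 hT
      _ = sigmaMax M ^ 2 * ∑ i, (X i j) ^ 2 := by
          rw [mul_pow, Real.sq_sqrt h3]
  have hsum : ∑ j, ∑ i, ((M * X) i j) ^ 2 ≤ sigmaMax M ^ 2 * ∑ j, ∑ i, (X i j) ^ 2 := by
    rw [Finset.mul_sum]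
    exact Finset.sum_le_sum fun j _ => key j
  unfold frobNorm
  rw [Finset.sum_comm (s := Finset.univ) (t := Finset.univ)
    (f := fun i j => ((M * X) i j) ^ 2)]
  rw [Finset.sum_comm (s := Finset.univ) (t := Finset.univ)
    (f := fun i j => (X i j) ^ 2)]
  calc Real.sqrt (∑ j, ∑ i, ((M * X) i j) ^ 2)
      ≤ Real.sqrt (sigmaMax M ^ 2 * ∑ j, ∑ i, (X i j) ^ 2) := Real.sqrt_le_sqrt hsum
    _ = sigmaMax M * Real.sqrt (∑ j, ∑ i, (X i j) ^ 2) := by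
        rw [Real.sqrt_mul (sq_nonneg _), Real.sqrt_sq (sigmaMax_nonneg M)]

/-- Rowwise bound: `‖X M‖_F ≤ ‖X‖_F σ(M)`. -/
lemma frobNorm_mul_le_right {m n k : ℕ} (X : Matrix (Fin m) (Fin n) ℝ)
    (M : Matrix (Fin n) (Fin k) ℝ) :
    frobNorm (X * M) ≤ frobNorm X * sigmaMax M := by
  have h := frobNorm_mul_le_left Mᵀ Xᵀ
  rw [← Matrix.transpose_mul, frobNorm_transpose, frobNorm_transpose, sigmaMax_transpose] at h
  linarith [h]

lemma skew_dot {n : ℕ} (A : Matrix (Fin n) (Fin n) ℝ) (hA : Aᵀ = -A) (x : Fin n → ℝ) :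
    x ⬝ᵥ (A *ᵥ x) = 0 := by
  have h1 : x ⬝ᵥ (A *ᵥ x) = (Aᵀ *ᵥ x) ⬝ᵥ x := by
    rw [Matrix.dotProduct_mulVec, Matrix.mulVec_transpose]
  rw [hA, Matrix.neg_mulVec, neg_dotProduct, dotProduct_comm] at h1
  rw [dotProduct_comm]
  linarith

lemma skew_grow {n : ℕ} (A : Matrix (Fin n) (Fin n) ℝ) (hA : Aᵀ = -A) (x : Fin n → ℝ) :
    x ⬝ᵥ x ≤ ((1 + A) *ᵥ x) ⬝ᵥ ((1 + A) *ᵥ x) := by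
  have h : (1 + A) *ᵥ x = x + A *ᵥ x := by
    rw [Matrix.add_mulVec, Matrix.one_mulVec]
  have hd := skew_dot A hA x
  have hd' : (A *ᵥ x) ⬝ᵥ x = 0 := by rw [dotProduct_comm]; exact hd
  have hnn : 0 ≤ (A *ᵥ x) ⬝ᵥ (A *ᵥ x) :=
    Finset.sum_nonneg fun i _ => mul_self_nonneg _
  rw [h, add_dotProduct, dotProduct_add, dotProduct_add]
  linarith

lemma skew_isUnit {n : ℕ} (A : Matrix (Fin n) (Fin n) ℝ) (hA : Aᵀ = -A) :
    IsUnit (1 + A) := by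
  rw [← Matrix.mulVec_injective_iff_isUnit]
  intro x y hxy
  have h0 : (1 + A) *ᵥ (x - y) = 0 := by
    rw [Matrix.mulVec_sub, hxy, sub_self]
  have h := skew_grow A hA (x - y)
  rw [h0] at h
  have h2 : (x - y) ⬝ᵥ (x - y) ≤ 0 := by simpa using h
  have h3 : (0:ℝ) ≤ (x - y) ⬝ᵥ (x - y) :=
    Finset.sum_nonneg fun i _ => mul_self_nonneg _
  have h4 : (x - y) ⬝ᵥ (x - y) = 0 := le_antisymm h2 h3
  rw [dotProduct_self_eq_zero] at h4
  exact sub_eq_zero.mp h4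

lemma skew_inv_sigmaMax_le_one {n : ℕ} (A : Matrix (Fin n) (Fin n) ℝ) (hA : Aᵀ = -A) :
    sigmaMax (1 + A)⁻¹ ≤ 1 := by
  have hu : IsUnit (1 + A) := skew_isUnit A hA
  have hdet : IsUnit (1 + A).det := (Matrix.isUnit_iff_isUnit_det _).mp hu
  apply ContinuousLinearMap.opNorm_le_bound _ zero_le_one
  intro y
  rw [one_mul]
  set B := (1 + A)⁻¹
  set x : Fin n → ℝ := B *ᵥ (y : Fin n → ℝ) with hxdef
  have hyx : (1 + A) *ᵥ x = (y : Fin n → ℝ) := by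
    rw [hxdef, Matrix.mulVec_mulVec, Matrix.mul_nonsing_inv _ hdet, Matrix.one_mulVec]
  have hT : (LinearMap.toContinuousLinearMap (Matrix.toEuclideanLin B)) y =
      (EuclideanSpace.equiv (Fin n) ℝ).symm x := rfl
  rw [hT, eucl_norm_eq, eucl_norm_eq]
  apply Real.sqrt_le_sqrt
  have key := skew_grow A hA x
  have e1 : x ⬝ᵥ x = ∑ i, (((EuclideanSpace.equiv (Fin n) ℝ).symm x : EuclideanSpace ℝ (Fin n)) i) ^ 2 := by
    refine Finset.sum_congr rfl fun i _ => ?_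
    simp [dotProduct, sq]
  have e2 : ((1 + A) *ᵥ x) ⬝ᵥ ((1 + A) *ᵥ x) = ∑ i, (y i) ^ 2 := by
    rw [hyx]
    exact Finset.sum_congr rfl fun i _ => by simp [dotProduct, sq]
  calc ∑ i, (((EuclideanSpace.equiv (Fin n) ℝ).symm x : EuclideanSpace ℝ (Fin n)) i) ^ 2
      = x ⬝ᵥ x := e1.symm
    _ ≤ ((1 + A) *ᵥ x) ⬝ᵥ ((1 + A) *ᵥ x) := key
    _ = ∑ i, (y i) ^ 2 := e2

end Aux

/-- Resolvent difference bound for skew-symmetric matrices. -/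
theorem skew_resolvent_difference_bound
    {n N : ℕ} (A₁ A₂ : Matrix (Fin n) (Fin n) ℝ)
    (hA₁ : A₁ᵀ = -A₁) (hA₂ : A₂ᵀ = -A₂)
    (U : Matrix (Fin n) (Fin N) ℝ) :
    IsUnit (1 + A₁) ∧ IsUnit (1 + A₂) ∧
      frobNorm ((1 + A₁)⁻¹ * U - (1 + A₂)⁻¹ * U) ≤ sigmaMax U * frobNorm (A₁ - A₂) := by
  have hu₁ : IsUnit (1 + A₁) := skew_isUnit A₁ hA₁
  have hu₂ : IsUnit (1 + A₂) := skew_isUnit A₂ hA₂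
  have hdet₁ : IsUnit (1 + A₁).det := (Matrix.isUnit_iff_isUnit_det _).mp hu₁
  have hdet₂ : IsUnit (1 + A₂).det := (Matrix.isUnit_iff_isUnit_det _).mp hu₂
  refine ⟨hu₁, hu₂, ?_⟩
  set B₁ := (1 + A₁)⁻¹
  set B₂ := (1 + A₂)⁻¹
  have hid : B₁ * U - B₂ * U = B₁ * ((A₂ - A₁) * (B₂ * U)) := by
    have h1 : B₁ * (1 + A₁) = 1 := Matrix.nonsing_inv_mul _ hdet₁
    have h2 : (1 + A₂) * B₂ = 1 := Matrix.mul_nonsing_inv _ hdet₂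
    have e2 : B₁ * ((A₂ - A₁) * (B₂ * U)) =
        B₁ * ((1 + A₂) * (B₂ * U)) - B₁ * ((1 + A₁) * (B₂ * U)) := by
      rw [← Matrix.mul_sub]
      congr 1
      rw [← Matrix.sub_mul]
      congr 1
      abel
    rw [e2, ← Matrix.mul_assoc (1 + A₂) B₂ U, h2, Matrix.one_mul,
      ← Matrix.mul_assoc B₁ (1 + A₁) (B₂ * U), h1, Matrix.one_mul]
  rw [hid]
  have c1 : frobNorm (B₁ * ((A₂ - A₁) * (B₂ * U))) ≤
      sigmaMax B₁ * frobNorm ((A₂ - A₁) * (B₂ * U)) := frobNorm_mul_le_left _ _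
  have c2 : frobNorm ((A₂ - A₁) * (B₂ * U)) ≤
      frobNorm (A₂ - A₁) * sigmaMax (B₂ * U) := frobNorm_mul_le_right _ _
  have c3 : sigmaMax (B₂ * U) ≤ sigmaMax B₂ * sigmaMax U := sigmaMax_mul_le _ _
  have hB₁ : sigmaMax B₁ ≤ 1 := skew_inv_sigmaMax_le_one A₁ hA₁
  have hB₂ : sigmaMax B₂ ≤ 1 := skew_inv_sigmaMax_le_one A₂ hA₂
  have hfe : frobNorm (A₂ - A₁) = frobNorm (A₁ - A₂) := by
    rw [show (A₂ - A₁ : Matrix (Fin n) (Fin n) ℝ) = -(A₁ - A₂) by abel, frobNorm_neg]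
  have hU : 0 ≤ sigmaMax U := sigmaMax_nonneg U
  have hF : 0 ≤ frobNorm (A₂ - A₁) := frobNorm_nonneg _
  have hB₂nn : 0 ≤ sigmaMax B₂ := sigmaMax_nonneg _
  have hB₁nn : 0 ≤ sigmaMax B₁ := sigmaMax_nonneg _
  have hW : 0 ≤ sigmaMax (B₂ * U) := sigmaMax_nonneg _
  have hWU : sigmaMax (B₂ * U) ≤ sigmaMax U := by
    calc sigmaMax (B₂ * U) ≤ sigmaMax B₂ * sigmaMax U := c3
      _ ≤ 1 * sigmaMax U := mul_le_mul_of_nonneg_right hB₂ hU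
      _ = sigmaMax U := one_mul _
  have hfW : 0 ≤ frobNorm ((A₂ - A₁) * (B₂ * U)) := frobNorm_nonneg _
  calc frobNorm (B₁ * ((A₂ - A₁) * (B₂ * U)))
      ≤ sigmaMax B₁ * frobNorm ((A₂ - A₁) * (B₂ * U)) := c1
    _ ≤ 1 * frobNorm ((A₂ - A₁) * (B₂ * U)) := mul_le_mul_of_nonneg_right hB₁ hfW
    _ = frobNorm ((A₂ - A₁) * (B₂ * U)) := one_mul _
    _ ≤ frobNorm (A₂ - A₁) * sigmaMax (B₂ * U) := c2
    _ ≤ frobNorm (A₂ - A₁) * sigmaMax U := mul_le_mul_of_nonneg_left hWU hF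
    _ = sigmaMax U * frobNorm (A₁ - A₂) := by rw [hfe, mul_comm]
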